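/- Let N ≥ 1 be a natural number and X₁,...,X_N random variables in [0,1]. Let Ŷ = (1 + Σ_{i=1}^{N} S_i^{-1})^{-1} with the convention 1/0 = ∞ and 1/∞ = 0, where S_i ≥ 0. Then Ŷ > 0 if and only if S_i > 0 for every i = 1,...,N. Consequently, if N ~ F, N'_i ~ F' i.i.d., X_{ij} ~ ν all independent and S_i = Σ_{j=1}^{N'_i} X_{ij}, then P(Y > 0) = φ(1 − φ'(1 − ν((0,1]))), where Y = (1 + Σ_{i=1}^{N}(Σ_{j=1}^{N'_i} X_{ij})^{-1})^{-1} and φ, φ' are the generating functions of F, F'. -/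

import Mathlib

open MeasureTheory ProbabilityTheory
open scoped ENNReal

/-- Generating function of a probability distribution on `ℕ`:
`φ(x) = Σ F({n}) xⁿ`. -/
noncomputable def pgfMeas (F : Measure ℕ) (x : ℝ) : ℝ := ∑' n : ℕ, (F {n}).toReal * x ^ n

/-- The index type for the family `(N, (N'_i)_i, (X_{ij})_{ij})`. -/
def famType : Unit ⊕ ℕ ⊕ ℕ × ℕ → Type
  | Sum.inl _ => ℕ
  | Sum.inr (Sum.inl _) => ℕ
  | Sum.inr (Sum.inr _) => ℝ

instance famTypeMeasurableSpace : ∀ i, MeasurableSpace (famType i)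
  | Sum.inl _ => inferInstanceAs (MeasurableSpace ℕ)
  | Sum.inr (Sum.inl _) => inferInstanceAs (MeasurableSpace ℕ)
  | Sum.inr (Sum.inr _) => inferInstanceAs (MeasurableSpace ℝ)

/-- The combined family of random variables `N, N'_i, X_{ij}`. -/
def fam {Ω : Type*} (N : Ω → ℕ) (N' : ℕ → Ω → ℕ) (X : ℕ → ℕ → Ω → ℝ) :
    ∀ i : Unit ⊕ ℕ ⊕ ℕ × ℕ, Ω → famType i
  | Sum.inl _ => N
  | Sum.inr (Sum.inl i) => N' i
  | Sum.inr (Sum.inr p) => X p.1 p.2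

/-- Auxiliary grouping lemma: σ-algebras generated by disjoint groups of jointly independent
random variables are independent. -/
theorem indep_groupBy {Ω ι κ : Type*} {mΩ : MeasurableSpace Ω} {μ : Measure Ω}
    {β : ι → Type*} {m : ∀ i, MeasurableSpace (β i)} {f : ∀ i, Ω → β i}
    (hf : iIndepFun (m := m) f μ) (hfm : ∀ i, Measurable (f i)) (p : ι → κ) :
    iIndep (fun k => ⨆ i ∈ p ⁻¹' {k}, (m i).comap (f i)) μ := by
  classical
  refine iIndepSets.iIndep (fun k => iSup₂_le fun i _ => (hfm i).comap_le)
    (π := fun k => piiUnionInter (fun i => {s | MeasurableSet[(m i).comap (f i)] s}) (p ⁻¹' {k}))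
    (fun k => isPiSystem_piiUnionInter _
      (fun i => @MeasurableSpace.isPiSystem_measurableSet Ω ((m i).comap (f i))) _)
    (fun k => (generateFrom_piiUnionInter_measurableSet (fun i => (m i).comap (f i)) _).symm) ?_
  rw [iIndepSets_iff]
  intro K E hE
  choose t0 ht0 g0 hg0 hE0 using hE
  set t : κ → Finset ι := fun k => if h : k ∈ K then t0 k h else ∅ with htdef
  set g : κ → ι → Set Ω := fun k => if h : k ∈ K then g0 k h else fun _ => Set.univ with hgdef
  have ht : ∀ k ∈ K, ∀ i ∈ t k, p i = k := by
    intro k hk i hi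
    rw [htdef] at hi; simp only [dif_pos hk] at hi
    exact ht0 k hk hi
  have hg : ∀ k (hk : k ∈ K), ∀ i ∈ t k, MeasurableSet[(m i).comap (f i)] (g k i) := by
    intro k hk i hi
    rw [htdef] at hi; simp only [dif_pos hk] at hi
    rw [hgdef]; simp only [dif_pos hk]
    exact hg0 k hk i hi
  have hE : ∀ k ∈ K, E k = ⋂ i ∈ t k, g k i := by
    intro k hk
    rw [htdef, hgdef]; simp only [dif_pos hk]; exact hE0 k hk
  set G : ι → Set Ω := fun i => g (p i) i with hGdef
  have hGg : ∀ k ∈ K, ∀ i ∈ t k, G i = g k i := fun k hk i hi => by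
    show g (p i) i = g k i
    rw [ht k hk i hi]
  have hdisj : (K : Set κ).PairwiseDisjoint t := by
    intro k hk k' hk' hkk'
    simp only [Finset.disjoint_left]
    intro i hi hi'
    exact hkk' ((ht k hk i hi).symm.trans (ht k' hk' i hi'))
  have hInter : (⋂ k ∈ K, E k) = ⋂ i ∈ K.biUnion t, G i := by
    rw [Finset.set_biInter_biUnion]
    exact Set.iInter₂_congr fun k hk => by
      rw [hE k hk]
      exact Set.iInter₂_congr fun i hi => (hGg k hk i hi).symm
  rw [hInter, hf.meas_biInter (S := K.biUnion t) ?meas]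
  case meas =>
    intro i hi
    obtain ⟨k, hk, hik⟩ := Finset.mem_biUnion.1 hi
    rw [hGg k hk i hik]
    exact hg k hk i hik
  rw [Finset.prod_biUnion hdisj]
  refine Finset.prod_congr rfl fun k hk => ?_
  rw [hE k hk, hf.meas_biInter (fun i hi => hg k hk i hi)]
  exact (Finset.prod_congr rfl fun i hi => by rw [hGg k hk i hi]).symm

theorem prob_Y_pos :
    (∀ N : ℕ, 1 ≤ N → ∀ S : Fin N → ℝ≥0∞,
      (0 < (1 + ∑ i, (S i)⁻¹)⁻¹ ↔ ∀ i, 0 < S i)) ∧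
    (∀ (Ω : Type) (_ : MeasurableSpace Ω) (μ : Measure Ω), IsProbabilityMeasure μ →
      ∀ (F F' : Measure ℕ), IsProbabilityMeasure F → IsProbabilityMeasure F' →
      ∀ (ν : Measure ℝ), IsProbabilityMeasure ν → ν (Set.Icc 0 1) = 1 →
      ∀ (N : Ω → ℕ) (N' : ℕ → Ω → ℕ) (X : ℕ → ℕ → Ω → ℝ),
        Measurable N → (∀ i, Measurable (N' i)) → (∀ i j, Measurable (X i j)) →
        iIndepFun (m := famTypeMeasurableSpace) (fam N N' X) μ →
        μ.map N = F → (∀ i, μ.map (N' i) = F') → (∀ i j, μ.map (X i j) = ν) →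
        (μ {ω | 0 < (1 + ∑ i ∈ Finset.range (N ω),
            (ENNReal.ofReal (∑ j ∈ Finset.range (N' i ω), X i j ω))⁻¹)⁻¹}).toReal
          = pgfMeas F (1 - pgfMeas F' (1 - (ν (Set.Ioc 0 1)).toReal))) := by
  constructor
  · intro n hn S
    simp [ENNReal.inv_pos, ENNReal.add_eq_top, ENNReal.sum_eq_top, ENNReal.inv_eq_top,
      pos_iff_ne_zero]
  · intro Ω mΩ μ hμ F F' hF hF' ν hν hν1 N N' X hN hN' hX hInd hmapN hmapN' hmapX
    classical
    -- measurability of the family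
    have hfm : ∀ i, Measurable (fam N N' X i) := by
      rintro (u | i | ⟨i, j⟩)
      · exact hN
      · exact hN' i
      · exact hX i j
    set p : Unit ⊕ ℕ ⊕ ℕ × ℕ → Option ℕ := fun i => match i with
      | .inl _ => none
      | .inr (.inl i) => some i
      | .inr (.inr q) => some q.1 with hpdef
    have hM := indep_groupBy hInd hfm p
    set M : Option ℕ → MeasurableSpace Ω :=
      fun k => ⨆ i ∈ p ⁻¹' {k}, (famTypeMeasurableSpace i).comap (fam N N' X i) with hMdef
    have hle : ∀ i, (famTypeMeasurableSpace i).comap (fam N N' X i) ≤ M (p i) := by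
      intro i
      exact le_iSup₂ (f := fun i' (_ : i' ∈ p ⁻¹' {p i}) =>
        (famTypeMeasurableSpace i').comap (fam N N' X i')) i rfl
    have hMle : ∀ k, M k ≤ mΩ := fun k => iSup₂_le fun i _ => (hfm i).comap_le
    have hXM : ∀ i j, Measurable[M (some i)] (X i j) := fun i j =>
      measurable_iff_comap_le.mpr (hle (.inr (.inr (i, j))))
    have hN'M : ∀ i, Measurable[M (some i)] (N' i) := fun i =>
      measurable_iff_comap_le.mpr (hle (.inr (.inl i)))
    set C : ℕ → ℕ → Set Ω := fun i m => {ω | 0 < ∑ j ∈ Finset.range m, X i j ω} with hCdef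
    set B : ℕ → Set Ω := fun i => {ω | 0 < ∑ j ∈ Finset.range (N' i ω), X i j ω} with hBdef
    have hBunion : ∀ i, B i = ⋃ m, (N' i ⁻¹' {m}) ∩ C i m := by
      intro i
      ext ω
      simp only [hBdef, hCdef, Set.mem_setOf_eq, Set.mem_iUnion, Set.mem_inter_iff,
        Set.mem_preimage, Set.mem_singleton_iff]
      exact ⟨fun h => ⟨N' i ω, rfl, h⟩, fun ⟨m, h1, h2⟩ => by rw [h1]; exact h2⟩
    have hCM : ∀ i m, MeasurableSet[M (some i)] (C i m) := fun i m =>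
      measurableSet_lt measurable_const (Finset.measurable_sum _ fun j _ => hXM i j)
    have hBM : ∀ i, MeasurableSet[M (some i)] (B i) := by
      intro i
      rw [hBunion i]
      exact MeasurableSet.iUnion fun m =>
        ((hN'M i) (measurableSet_singleton m)).inter (hCM i m)
    have hCmeas : ∀ i m, MeasurableSet (C i m) := fun i m => hMle _ _ (hCM i m)
    have hBmeas : ∀ i, MeasurableSet (B i) := fun i => hMle _ _ (hBM i)
    -- laws
    have hNn : ∀ n, μ (N ⁻¹' {n}) = F {n} := fun n => by
      rw [← hmapN, Measure.map_apply hN (measurableSet_singleton n)]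
    have hN'm : ∀ i m, μ (N' i ⁻¹' {m}) = F' {m} := fun i m => by
      rw [← hmapN' i, Measure.map_apply (hN' i) (measurableSet_singleton m)]
    set r : ℝ≥0∞ := ν (Set.Iic 0) with hrdef
    have hXle : ∀ i j, μ (X i j ⁻¹' Set.Iic 0) = r := fun i j => by
      rw [hrdef, ← hmapX i j, Measure.map_apply (hX i j) measurableSet_Iic]
    have hIio : ν (Set.Iio 0) = 0 := by
      have h1 : Set.Iio (0:ℝ) ⊆ (Set.Icc 0 1)ᶜ := fun x hx =>
        by simp only [Set.mem_compl_iff, Set.mem_Icc, not_and_or, not_le]; exact Or.inl hx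
      have h2 : ν (Set.Icc 0 1)ᶜ = 0 := by
        rw [measure_compl measurableSet_Icc (measure_ne_top ν _), hν1, measure_univ, tsub_self]
      exact le_antisymm (h2 ▸ measure_mono h1) zero_le
    have hXneg : ∀ i j, μ (X i j ⁻¹' Set.Iio 0) = 0 := fun i j => by
      have h := hIio
      rw [← hmapX i j, Measure.map_apply (hX i j) measurableSet_Iio] at h
      exact h
    -- inner product formula
    have hADprod : ∀ i m, μ ((N' i ⁻¹' {m}) ∩ ⋂ j ∈ Finset.range m, X i j ⁻¹' Set.Iic 0)
        = F' {m} * r ^ m := by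
      intro i m
      set S : Finset (Unit ⊕ ℕ ⊕ ℕ × ℕ) :=
        insert (Sum.inr (Sum.inl i))
          ((Finset.range m).image fun j => Sum.inr (Sum.inr (i, j))) with hSdef
      set s : (Unit ⊕ ℕ ⊕ ℕ × ℕ) → Set Ω := fun idx => match idx with
        | .inl _ => Set.univ
        | .inr (.inl i') => N' i' ⁻¹' {m}
        | .inr (.inr q) => X q.1 q.2 ⁻¹' Set.Iic 0 with hsdef
      have hnotmem : (Sum.inr (Sum.inl i) : Unit ⊕ ℕ ⊕ ℕ × ℕ)
          ∉ (Finset.range m).image fun j => Sum.inr (Sum.inr (i, j)) := by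
        simp
      have hmeas : ∀ idx ∈ S, MeasurableSet[(famTypeMeasurableSpace idx).comap
          (fam N N' X idx)] (s idx) := by
        rintro (u | i' | ⟨i', j'⟩) _
        · exact MeasurableSet.univ
        · exact ⟨{m}, measurableSet_singleton m, rfl⟩
        · exact ⟨(Set.Iic (0:ℝ) : Set ℝ), show MeasurableSet (Set.Iic (0:ℝ)) from measurableSet_Iic, rfl⟩
      have hinter : (⋂ idx ∈ S, s idx)
          = (N' i ⁻¹' {m}) ∩ ⋂ j ∈ Finset.range m, X i j ⁻¹' Set.Iic 0 := by
        rw [hSdef, Finset.set_biInter_insert, Finset.set_biInter_finset_image]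
      rw [← hinter, hInd.meas_biInter hmeas, hSdef, Finset.prod_insert hnotmem,
        Finset.prod_image (by intro a _ b _ h; simpa using h)]
      have : ∀ j ∈ Finset.range m, μ (s (Sum.inr (Sum.inr (i, j)))) = r := fun j _ => hXle i j
      rw [Finset.prod_congr rfl this, Finset.prod_const, Finset.card_range]
      show μ (N' i ⁻¹' {m}) * r ^ m = _
      rw [hN'm i m]
    -- μ (A ∩ Cᶜ) = μ (A ∩ D)
    have hAC : ∀ i m, μ ((N' i ⁻¹' {m}) ∩ C i m) = F' {m} * (1 - r ^ m) := by
      intro i m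
      set A := N' i ⁻¹' {m} with hAdef
      set D := ⋂ j ∈ Finset.range m, X i j ⁻¹' Set.Iic 0 with hDdef
      set G := ⋂ j ∈ Finset.range m, X i j ⁻¹' Set.Ici 0 with hGdef
      have hGnull : μ Gᶜ = 0 := by
        rw [hGdef, Set.compl_iInter₂]
        refine measure_biUnion_null_iff (Set.to_countable _) |>.2 fun j _ => ?_
        have : (X i j ⁻¹' Set.Ici 0)ᶜ = X i j ⁻¹' Set.Iio 0 := by
          ext ω; simp [not_le]
        rw [this]; exact hXneg i j
      have hACcD : μ (A ∩ (C i m)ᶜ) = μ (A ∩ D) := by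
        rw [← measure_inter_conull (t := G) hGnull, ← measure_inter_conull (s := A ∩ D) hGnull]
        congr 1
        ext ω
        simp only [Set.mem_inter_iff, Set.mem_compl_iff, hCdef, Set.mem_setOf_eq, hDdef,
          Set.mem_iInter, Set.mem_preimage, Set.mem_Iic, Set.mem_Ici, hGdef, not_lt]
        constructor
        · rintro ⟨⟨hA, hsum⟩, hpos⟩
          refine ⟨⟨hA, fun j hj => ?_⟩, hpos⟩
          have := (Finset.sum_eq_zero_iff_of_nonneg (fun j hj => hpos j hj)).1
            (le_antisymm hsum (Finset.sum_nonneg fun j hj => hpos j hj)) j hj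
          exact this.le
        · rintro ⟨⟨hA, hle'⟩, hpos⟩
          exact ⟨⟨hA, Finset.sum_nonpos hle'⟩, hpos⟩
      have hsplit : A ∩ C i m = A \ (A ∩ (C i m)ᶜ) := by
        ext ω
        simp only [Set.mem_inter_iff, Set.mem_diff, Set.mem_compl_iff]
        tauto
      have hAmeas : MeasurableSet A := hN' i (measurableSet_singleton m)
      rw [hsplit, measure_diff (Set.inter_subset_left)
        ((hAmeas.inter (hCmeas i m).compl).nullMeasurableSet) (measure_ne_top μ _),
        hACcD, hDdef, hADprod i m, hAdef, hN'm i m,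
        ENNReal.mul_sub (fun _ _ => measure_ne_top F' _), mul_one]
    -- value of μ (B i)
    set Q : ℝ≥0∞ := ∑' m, F' {m} * r ^ m with hQdef
    have hF'sum : ∑' m, F' ({m} : Set ℕ) = 1 := by
      have : (⋃ m : ℕ, ({m} : Set ℕ)) = Set.univ := by
        ext x; simp
      rw [← measure_univ (μ := F'), ← this,
        measure_iUnion (fun a b hab => by simpa [Set.disjoint_left] using hab)
        (fun m => measurableSet_singleton m)]
    have hQle : Q ≤ 1 := by
      rw [hQdef, ← hF'sum]
      exact ENNReal.tsum_le_tsum fun m =>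
        mul_le_of_le_one_right zero_le (pow_le_one' prob_le_one m)
    have hQtop : Q ≠ ∞ := (lt_of_le_of_lt hQle ENNReal.one_lt_top).ne
    set q : ℝ≥0∞ := 1 - Q with hqdef
    have hBval : ∀ i, μ (B i) = q := by
      intro i
      have hd : Pairwise (Function.onFun Disjoint fun m => (N' i ⁻¹' {m}) ∩ C i m) := by
        intro a b hab
        simp only [Function.onFun, Set.disjoint_left]
        rintro ω ⟨h1, -⟩ ⟨h2, -⟩
        exact hab ((Set.mem_singleton_iff.1 h1).symm.trans (Set.mem_singleton_iff.1 h2))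
      rw [hBunion i, measure_iUnion hd (fun m =>
        ((hN' i) (measurableSet_singleton m)).inter (hCmeas i m))]
      have hterm : ∀ m : ℕ, μ ((N' i ⁻¹' {m}) ∩ C i m) = F' {m} - F' {m} * r ^ m := by
        intro m
        rw [hAC i m, ENNReal.mul_sub (fun _ _ => measure_ne_top F' _), mul_one]
      rw [tsum_congr hterm, ENNReal.tsum_sub hQtop
        (fun m => mul_le_of_le_one_right zero_le (pow_le_one' prob_le_one m)),
        hF'sum, ← hQdef, ← hqdef]
    -- main decomposition
    have hEvent : {ω | 0 < (1 + ∑ i ∈ Finset.range (N ω),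
          (ENNReal.ofReal (∑ j ∈ Finset.range (N' i ω), X i j ω))⁻¹)⁻¹}
        = ⋃ n, (N ⁻¹' {n}) ∩ ⋂ i ∈ Finset.range n, B i := by
      ext ω
      simp only [Set.mem_setOf_eq, Set.mem_iUnion, Set.mem_inter_iff, Set.mem_preimage,
        Set.mem_singleton_iff, Set.mem_iInter]
      rw [ENNReal.inv_pos]
      simp only [Ne, ENNReal.add_eq_top, ENNReal.one_ne_top, false_or, ENNReal.sum_eq_top,
        not_exists, not_and, ENNReal.inv_eq_top, hBdef, Set.mem_setOf_eq]
      constructor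
      · intro h
        refine ⟨N ω, rfl, fun i hi => ?_⟩
        have := h i hi
        rw [ENNReal.ofReal_eq_zero, not_le] at this
        exact this
      · rintro ⟨n, hn, h⟩ i hi
        rw [ENNReal.ofReal_eq_zero, not_le]
        exact h i (hn ▸ hi)
    have hdisjN : Pairwise (Function.onFun Disjoint fun n =>
        (N ⁻¹' {n}) ∩ ⋂ i ∈ Finset.range n, B i) := by
      intro a b hab
      simp only [Function.onFun, Set.disjoint_left]
      rintro ω ⟨h1, -⟩ ⟨h2, -⟩
      exact hab ((Set.mem_singleton_iff.1 h1).symm.trans (Set.mem_singleton_iff.1 h2))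
    have hmeasN : ∀ n, MeasurableSet ((N ⁻¹' {n}) ∩ ⋂ i ∈ Finset.range n, B i) := fun n =>
      (hN (measurableSet_singleton n)).inter (MeasurableSet.biInter (Set.to_countable _)
        fun i _ => hBmeas i)
    -- independence step
    have hstep : ∀ n, μ ((N ⁻¹' {n}) ∩ ⋂ i ∈ Finset.range n, B i) = F {n} * q ^ n := by
      intro n
      set K : Finset (Option ℕ) := insert none ((Finset.range n).image some) with hKdef
      set E : Option ℕ → Set Ω := fun k => k.elim (N ⁻¹' {n}) B with hEdef
      have hnone : (none : Option ℕ) ∉ (Finset.range n).image some := by simp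
      have hEm : ∀ k ∈ K, MeasurableSet[M k] (E k) := by
        intro k hk
        match k with
        | none =>
          exact hle (Sum.inl ()) _ ⟨{n}, measurableSet_singleton n, rfl⟩
        | some i => exact hBM i
      have h := hM.meas_biInter hEm
      have hint : (⋂ k ∈ K, E k) = (N ⁻¹' {n}) ∩ ⋂ i ∈ Finset.range n, B i := by
        rw [hKdef, Finset.set_biInter_insert, Finset.set_biInter_finset_image]
        rfl
      rw [hint] at h
      rw [h, hKdef, Finset.prod_insert hnone,
        Finset.prod_image (by intro a _ b _ h; simpa using h)]
      show μ (N ⁻¹' {n}) * ∏ i ∈ Finset.range n, μ (B i) = _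
      rw [hNn n, Finset.prod_congr rfl (fun i _ => hBval i), Finset.prod_const,
        Finset.card_range]
    -- put together
    rw [hEvent, measure_iUnion hdisjN hmeasN, tsum_congr hstep]
    -- real conversions
    have hqtop : q ≠ ∞ := (lt_of_le_of_lt (tsub_le_self) ENNReal.one_lt_top).ne
    set pp : ℝ≥0∞ := ν (Set.Ioc 0 1) with hppdef
    have hrp : r + pp = 1 := by
      rw [hrdef, hppdef, ← measure_union (Set.Iic_disjoint_Ioc le_rfl) measurableSet_Ioc,
        Set.Iic_union_Ioc_eq_Iic zero_le_one]
      refine le_antisymm prob_le_one ?_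
      rw [← hν1]
      exact measure_mono Set.Icc_subset_Iic_self
    have hpple : pp ≤ 1 := prob_le_one
    have hrtoReal : r.toReal = 1 - pp.toReal := by
      have := congrArg ENNReal.toReal hrp
      rw [ENNReal.toReal_add (measure_ne_top ν _) (measure_ne_top ν _), ENNReal.toReal_one]
        at this
      linarith
    have hQtoReal : Q.toReal = pgfMeas F' (1 - pp.toReal) := by
      rw [hQdef, ENNReal.tsum_toReal_eq (fun m =>
        ENNReal.mul_ne_top (measure_ne_top F' _) (ENNReal.pow_ne_top
          (lt_of_le_of_lt prob_le_one ENNReal.one_lt_top).ne))]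
      unfold pgfMeas
      refine tsum_congr fun m => ?_
      rw [ENNReal.toReal_mul, ENNReal.toReal_pow, hrtoReal]
    have hqtoReal : q.toReal = 1 - pgfMeas F' (1 - pp.toReal) := by
      rw [hqdef, ENNReal.toReal_sub_of_le hQle ENNReal.one_ne_top, ENNReal.toReal_one,
        hQtoReal]
    rw [ENNReal.tsum_toReal_eq (fun n =>
      ENNReal.mul_ne_top (measure_ne_top F _) (ENNReal.pow_ne_top hqtop))]
    unfold pgfMeas
    refine tsum_congr fun n => ?_
    rw [ENNReal.toReal_mul, ENNReal.toReal_pow, hqtoReal]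
    rfl
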